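/- Let $f(x) = Ax - ax^2$ with $A \in (1,2)$, $a>0$, $g_* = (A-1)/a$, and $(\bar g_n)_{n\in\mathbb{Z}}$ the orbit with $\bar g_0 = \omega_0 g_*$, $\omega_0 \in (0,1)$. Then for any integers $p < n$ with $p \ge 0$, the product satisfies $\prod_{p < j < n} \frac{f'(\bar g_j)}{2-A} \le \exp\!\left[\frac{2(1-\omega_0)(1+\omega_0 - A\omega_0)}{\omega_0 (2-A)}\right]$. -/

import Mathlib

set_option maxHeartbeats 1000000


/-- for `0 ≤ p < n`,
`∏_{p<j<n} f'(ḡ_j)/(2-A) ≤ exp[ 2(1-ω₀)(1+ω₀-Aω₀) / (ω₀(2-A)) ]`, where `f'(x) = A - 2ax`. -/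
theorem stmt_7 (A a : ℝ) (hA1 : 1 < A) (hA2 : A < 2) (ha : 0 < a)
    (f : ℝ → ℝ) (hf : ∀ x, f x = A * x - a * x ^ 2)
    (gs : ℝ) (hgs : gs = (A - 1) / a)
    (ω0 : ℝ) (hω0 : ω0 ∈ Set.Ioo (0 : ℝ) 1)
    (gbar : ℤ → ℝ) (hmem : ∀ n : ℤ, gbar n ∈ Set.Ioo 0 gs)
    (h0 : gbar 0 = ω0 * gs) (hrec : ∀ n : ℤ, gbar (n + 1) = f (gbar n)) :
    ∀ p n : ℤ, 0 ≤ p → p < n →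
      ∏ j ∈ Finset.Ioo p n, (A - 2 * a * gbar j) / (2 - A) ≤
        Real.exp (2 * (1 - ω0) * (1 + ω0 - A * ω0) / (ω0 * (2 - A))) := by
  obtain ⟨hω0a, hω0b⟩ := hω0
  have hgs0 : 0 < gs := by rw [hgs]; exact div_pos (by linarith) ha
  have hags : a * gs = A - 1 := by rw [hgs]; field_simp
  set r : ℝ := 1 + ω0 - A * ω0 with hrdef
  have hr0 : 0 < r := by nlinarith
  have hr1 : r < 1 := by nlinarith
  -- key lower bound: gs - gbar j ≤ gs (1-ω0) r^j for j ≥ 0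
  have L1 : ∀ j : ℤ, 0 ≤ j → gs - gbar j ≤ gs * (1 - ω0) * r ^ j := by
    intro j hj
    refine Int.le_induction (motive := fun k _ => gs - gbar k ≤ gs * (1 - ω0) * r ^ k) ?_ ?_ j hj
    · show gs - gbar 0 ≤ gs * (1 - ω0) * r ^ (0:ℤ)
      rw [h0]; simp; nlinarith
    · intro n hn ih
      show gs - gbar (n+1) ≤ gs * (1 - ω0) * r ^ (n+1)
      obtain ⟨hg0, hg1⟩ := hmem n
      have hpow : (0:ℝ) < r ^ n := zpow_pos hr0 n
      have hpow1 : r ^ n ≤ 1 := zpow_le_one₀ hr0 hr1.le hn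
      have hglo : ω0 * gs ≤ gbar n := by nlinarith
      have hstep : gs - gbar (n + 1) = (gs - gbar n) * (1 - a * gbar n) := by
        rw [hrec n, hf]; nlinarith
      have h1ag : 0 < 1 - a * gbar n := by nlinarith
      have h1ag' : 1 - a * gbar n ≤ r := by
        have : a * (ω0 * gs) ≤ a * gbar n := by nlinarith
        rw [hrdef]; nlinarith
      rw [hstep, zpow_add_one₀ (ne_of_gt hr0)]
      calc (gs - gbar n) * (1 - a * gbar n)
          ≤ (gs * (1 - ω0) * r ^ n) * r := by
            apply mul_le_mul ih h1ag' h1ag.le (by nlinarith)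
        _ = gs * (1 - ω0) * (r ^ n * r) := by ring
  -- geometric sum bound
  have L2 : ∀ p : ℤ, ∀ n : ℤ, p + 1 ≤ n →
      ∑ j ∈ Finset.Ioo p n, r ^ j + r ^ n / (1 - r) ≤ r ^ (p + 1) / (1 - r) := by
    intro p n hn
    refine Int.le_induction (motive := fun k _ => ∑ j ∈ Finset.Ioo p k, r ^ j + r ^ k / (1 - r) ≤ r ^ (p + 1) / (1 - r)) ?_ ?_ n hn
    · show ∑ j ∈ Finset.Ioo p (p+1), r ^ j + r ^ (p+1) / (1 - r) ≤ r ^ (p + 1) / (1 - r)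
      have : Finset.Ioo p (p + 1) = ∅ := by
        ext x; simp only [Finset.mem_Ioo, Finset.notMem_empty, iff_false]; omega
      rw [this]; simp
    · intro n hn ih
      show ∑ j ∈ Finset.Ioo p (n+1), r ^ j + r ^ (n+1) / (1 - r) ≤ r ^ (p + 1) / (1 - r)
      have hins : Finset.Ioo p (n + 1) = insert n (Finset.Ioo p n) := by
        ext x; simp only [Finset.mem_Ioo, Finset.mem_insert]; omega
      have hnot : n ∉ Finset.Ioo p n := by simp
      rw [hins, Finset.sum_insert hnot]
      have key : r ^ n + r ^ (n + 1) / (1 - r) = r ^ n / (1 - r) := by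
        have h1r0 : (1:ℝ) - r ≠ 0 := by linarith
        rw [zpow_add_one₀ (ne_of_gt hr0)]
        field_simp
        ring
      linarith [ih]
  intro p n hp hpn
  -- each factor ≤ exp of something
  have hfac : ∀ j ∈ Finset.Ioo p n,
      (A - 2 * a * gbar j) / (2 - A) ≤ Real.exp (2 * a * (gs - gbar j) / (2 - A)) := by
    intro j hj
    have h2A : (0:ℝ) < 2 - A := by linarith
    have : (A - 2 * a * gbar j) / (2 - A) = 1 + 2 * a * (gs - gbar j) / (2 - A) := by
      field_simp; nlinarith
    rw [this]
    have := Real.add_one_le_exp (2 * a * (gs - gbar j) / (2 - A))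
    linarith
  have h2A : (0:ℝ) < 2 - A := by linarith
  have hnonneg : ∀ j ∈ Finset.Ioo p n, 0 ≤ (A - 2 * a * gbar j) / (2 - A) := by
    intro j hj
    obtain ⟨hg0, hg1⟩ := hmem j
    apply div_nonneg _ h2A.le
    nlinarith
  calc ∏ j ∈ Finset.Ioo p n, (A - 2 * a * gbar j) / (2 - A)
      ≤ ∏ j ∈ Finset.Ioo p n, Real.exp (2 * a * (gs - gbar j) / (2 - A)) :=
        Finset.prod_le_prod hnonneg hfac
    _ = Real.exp (∑ j ∈ Finset.Ioo p n, 2 * a * (gs - gbar j) / (2 - A)) := by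
        rw [Real.exp_sum]
    _ ≤ Real.exp (2 * (1 - ω0) * (1 + ω0 - A * ω0) / (ω0 * (2 - A))) := by
        apply Real.exp_le_exp.mpr
        have hsum1 : ∑ j ∈ Finset.Ioo p n, 2 * a * (gs - gbar j) / (2 - A)
            ≤ ∑ j ∈ Finset.Ioo p n, 2 * a * gs * (1 - ω0) / (2 - A) * r ^ j := by
          apply Finset.sum_le_sum
          intro j hj
          have hj0 : 0 ≤ j := by
            simp only [Finset.mem_Ioo] at hj; omega
          have := L1 j hj0
          rw [div_le_iff₀ h2A] at *
          calc 2 * a * (gs - gbar j) ≤ 2 * a * (gs * (1 - ω0) * r ^ j) := by nlinarith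
            _ = 2 * a * gs * (1 - ω0) / (2 - A) * r ^ j * (2 - A) := by field_simp
        have hsum2 : ∑ j ∈ Finset.Ioo p n, 2 * a * gs * (1 - ω0) / (2 - A) * r ^ j
            = 2 * a * gs * (1 - ω0) / (2 - A) * ∑ j ∈ Finset.Ioo p n, r ^ j := by
          rw [Finset.mul_sum]
        have hgeo : ∑ j ∈ Finset.Ioo p n, r ^ j ≤ r / (1 - r) := by
          have h2 := L2 p n (by omega)
          have h3 : r ^ (p + 1) ≤ r := by
            have := zpow_le_zpow_right_of_le_one₀ hr0 hr1.le (show (1:ℤ) ≤ p + 1 by omega)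
            simpa using this
          have h4 : 0 < r ^ n / (1 - r) := div_pos (zpow_pos hr0 n) (by linarith)
          have h5 : r ^ (p + 1) / (1 - r) ≤ r / (1 - r) :=
            div_le_div_of_nonneg_right h3 (by linarith)
          linarith
        have hconst : 0 ≤ 2 * a * gs * (1 - ω0) / (2 - A) :=
          div_nonneg (by nlinarith) h2A.le
        have hfinal : 2 * a * gs * (1 - ω0) / (2 - A) * (r / (1 - r))
            = 2 * (1 - ω0) * (1 + ω0 - A * ω0) / (ω0 * (2 - A)) := by
          have h1r : 1 - r = (A - 1) * ω0 := by rw [hrdef]; ring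
          have hd1 : ((2:ℝ) - A) * ((A - 1) * ω0) ≠ 0 := by nlinarith
          have hd2 : ω0 * ((2:ℝ) - A) ≠ 0 := by nlinarith
          rw [h1r, div_mul_div_comm, div_eq_div_iff hd1 hd2]
          linear_combination (2 * (1 - ω0) * r * ω0 * (2 - A)) * hags
        calc ∑ j ∈ Finset.Ioo p n, 2 * a * (gs - gbar j) / (2 - A)
            ≤ 2 * a * gs * (1 - ω0) / (2 - A) * ∑ j ∈ Finset.Ioo p n, r ^ j := by
              rw [← hsum2]; exact hsum1
          _ ≤ 2 * a * gs * (1 - ω0) / (2 - A) * (r / (1 - r)) := by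
              apply mul_le_mul_of_nonneg_left hgeo hconst
          _ = _ := hfinal
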